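/- For the continuous-time quantum walk on the n-cube started at a vertex, at time t = kπn/4 for any odd natural number k, the probability distribution |ψ_t(x)|² is exactly the uniform distribution 2^{-n} on all 2ⁿ vertices. -/

import Mathlib

open Finset

namespace HQW

lemma z2 : ∀ a : ZMod 2, a = 0 ∨ a = 1 := by decide
lemma z2add : (1 + 1 : ZMod 2) = 0 := by decide

noncomputable def e : ZMod 2 → ℂ := fun b => if b = 0 then 1 else -1

lemma e_zero : e 0 = 1 := by simp [e]
lemma e_one : e 1 = -1 := by simp [e]
lemma e_cases (a : ZMod 2) : e a = 1 ∨ e a = -1 := by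
  rcases z2 a with h | h <;> simp [h, e_zero, e_one]
lemma e_add (a b : ZMod 2) : e (a + b) = e a * e b := by
  rcases z2 a with ha | ha <;> rcases z2 b with hb | hb <;>
    simp [ha, hb, e_zero, e_one, z2add]

variable {n : ℕ}

lemma sum_prod (g : Fin n → ZMod 2 → ℂ) :
    ∑ s : Fin n → ZMod 2, ∏ i, g i (s i) = ∏ i, (g i 0 + g i 1) := by
  rw [← Fintype.prod_sum g]
  exact prod_congr rfl fun i _ => Fin.sum_univ_two (g i)

noncomputable def F (n : ℕ) : Matrix (Fin n → ZMod 2) (Fin n → ZMod 2) ℂ :=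
  fun x y => ∏ i, e (x i * y i)

lemma one_add_e (a : ZMod 2) : 1 + e a = if a = 0 then 2 else 0 := by
  rcases z2 a with h | h <;> simp [h, e_zero, e_one] <;> norm_num

lemma one_sub_e (a : ZMod 2) : 1 - e a = if a = 0 then 0 else 2 := by
  rcases z2 a with h | h <;> simp [h, e_zero, e_one] <;> norm_num

lemma FF : F n * F n = (2 ^ n : ℂ) • 1 := by
  ext x y
  simp only [Matrix.mul_apply, F]
  have h1 : ∀ s : Fin n → ZMod 2,
      (∏ i, e (x i * s i)) * ∏ i, e (s i * y i) = ∏ i, e ((x i + y i) * s i) := by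
    intro s
    rw [← prod_mul_distrib]
    refine prod_congr rfl fun i _ => ?_
    rw [← e_add]; ring_nf
  rw [Finset.sum_congr rfl fun s _ => h1 s,
    sum_prod (fun i b => e ((x i + y i) * b))]
  by_cases hxy : x = y
  · subst hxy
    simp only [Matrix.smul_apply, Matrix.one_apply_eq, smul_eq_mul, mul_one]
    have h2 : ∀ i : Fin n, x i + x i = 0 := fun i => by
      rcases z2 (x i) with h | h <;> simp [h, z2add]
    simp only [h2, zero_mul, e_zero]
    norm_num
  · obtain ⟨i, hi⟩ : ∃ i, x i ≠ y i := by
      by_contra h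
      push_neg at h
      exact hxy (funext h)
    have hz : x i + y i = 1 := by
      rcases z2 (x i) with h1 | h1 <;> rcases z2 (y i) with h2 | h2 <;>
        simp_all [z2add]
    rw [Finset.prod_eq_zero (mem_univ i)]
    · simp [Matrix.one_apply_ne hxy]
    · simp [hz, e_zero, e_one]

end HQW

namespace HQW
open Finset
variable {n : ℕ}

def w (s : Fin n → ZMod 2) : ℕ := (univ.filter fun i => s i = 1).card

noncomputable def d (n : ℕ) (s : Fin n → ZMod 2) : ℂ := ((n : ℂ) - 2 * w s) / n

lemma sum_e (s : Fin n → ZMod 2) : ∑ i, e (s i) = (n : ℂ) - 2 * w s := by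
  have h1 : ∀ i, e (s i) = if s i = 1 then (-1 : ℂ) else 1 := by
    intro i
    rcases z2 (s i) with h | h <;> simp [h, e_zero, e_one]
  simp_rw [h1]
  rw [Finset.sum_ite, Finset.sum_const, Finset.sum_const]
  have hc : w s + (univ.filter fun i => ¬ s i = 1).card = n := by
    simpa [w] using Finset.card_filter_add_card_filter_not
      (s := (univ : Finset (Fin n))) (p := fun i => s i = 1)
  have : (univ.filter fun i => ¬ s i = 1).card = n - w s := by omega
  rw [this]
  have hwn : w s ≤ n := by omega
  simp only [smul_eq_mul, nsmul_eq_mul, mul_one, mul_neg_one, w]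
  have hwn' : (univ.filter fun x => s x = 1).card ≤ n := hwn
  rw [Nat.cast_sub hwn']
  show _ = (n : ℂ) - 2 * ((univ.filter fun x => s x = 1).card : ℂ)
  ring

lemma nd (hn : n ≠ 0) (s : Fin n → ZMod 2) : (n : ℂ) * d n s = (n : ℂ) - 2 * w s := by
  have : (n : ℂ) ≠ 0 := Nat.cast_ne_zero.mpr hn
  rw [d]; field_simp

lemma inner_sum (z : Fin n → ZMod 2) (i : Fin n) :
    ∑ s : Fin n → ZMod 2, ∏ j, (e (z j * s j) * if j = i then e (s j) else 1)
      = if univ.filter (fun j => z j ≠ 0) = {i} then (2 ^ n : ℂ) else 0 := by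
  rw [sum_prod (fun j b => e (z j * b) * if j = i then e b else 1)]
  have hfac : ∀ j, (e (z j * 0) * if j = i then e 0 else 1)
      + (e (z j * 1) * if j = i then e 1 else 1)
      = if j = i then (if z j = 0 then 0 else 2) else (if z j = 0 then 2 else 0) := by
    intro j
    by_cases hj : j = i <;>
      simp [hj, e_zero, e_one, mul_one, ← one_sub_e, ← one_add_e] <;> ring
  rw [prod_congr rfl fun j _ => hfac j]
  by_cases hf : univ.filter (fun j => z j ≠ 0) = {i}
  · rw [if_pos hf]
    have hzi : z i ≠ 0 := by
      have : i ∈ univ.filter (fun j => z j ≠ 0) := by rw [hf]; exact mem_singleton_self i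
      simpa using this
    have hzj : ∀ j, j ≠ i → z j = 0 := by
      intro j hj
      by_contra h
      have : j ∈ univ.filter (fun j => z j ≠ 0) := by simpa using h
      rw [hf, mem_singleton] at this
      exact hj this
    have : ∀ j : Fin n, (if j = i then (if z j = 0 then (0:ℂ) else 2) else (if z j = 0 then 2 else 0)) = 2 := by
      intro j
      by_cases hj : j = i
      · simp [hj, hzi]
      · simp [hj, hzj j hj]
    rw [prod_congr rfl fun j _ => this j]
    simp
  · rw [if_neg hf]
    -- some factor is zero
    by_cases hzi : z i = 0
    · exact Finset.prod_eq_zero (mem_univ i) (by simp [hzi])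
    · -- then there is j ≠ i with z j ≠ 0
      obtain ⟨j, hj, hji⟩ : ∃ j, z j ≠ 0 ∧ j ≠ i := by
        by_contra h
        push_neg at h
        apply hf
        ext j
        simp only [mem_filter, mem_univ, true_and, mem_singleton]
        constructor
        · intro hzj; exact h j hzj
        · intro hji; subst hji; exact hzi
      exact Finset.prod_eq_zero (mem_univ j) (by simp [hji, hj])

lemma key (hn : n ≠ 0) (x y : Fin n → ZMod 2) :
    ∑ s : Fin n → ZMod 2, F n x s * d n s * F n s y
      = if (univ.filter fun i => x i ≠ y i).card = 1 then (2 ^ n : ℂ) / n else 0 := by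
  set z : Fin n → ZMod 2 := fun i => x i + y i with hz
  have hcn : (n : ℂ) ≠ 0 := Nat.cast_ne_zero.mpr hn
  have hmul : ∀ s : Fin n → ZMod 2, F n x s * d n s * F n s y
      = d n s * ∏ j, e (z j * s j) := by
    intro s
    rw [show F n x s * d n s * F n s y = d n s * (F n x s * F n s y) by ring]
    congr 1
    simp only [F, ← prod_mul_distrib]
    refine prod_congr rfl fun j _ => ?_
    rw [← e_add]; congr 1; ring
  rw [Finset.sum_congr rfl fun s _ => hmul s]
  -- multiply through by n
  have hmain : ∑ s : Fin n → ZMod 2, ((n : ℂ) * d n s) * ∏ j, e (z j * s j)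
      = if (univ.filter fun j => z j ≠ 0).card = 1 then (2 ^ n : ℂ) else 0 := by
    have step1 : ∀ s : Fin n → ZMod 2, ((n : ℂ) * d n s) * ∏ j, e (z j * s j)
        = ∑ i, ∏ j, (e (z j * s j) * if j = i then e (s j) else 1) := by
      intro s
      rw [nd hn, ← sum_e]
      rw [Finset.sum_mul]
      refine Finset.sum_congr rfl fun i _ => ?_
      rw [prod_mul_distrib, Finset.prod_ite_eq' univ i (fun j => e (s j)),
        if_pos (mem_univ i)]
      ring
    rw [Finset.sum_congr rfl fun s _ => step1 s, Finset.sum_comm]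
    rw [Finset.sum_congr rfl fun i _ => inner_sum z i]
    by_cases hcard : (univ.filter fun j => z j ≠ 0).card = 1
    · rw [if_pos hcard]
      obtain ⟨a, ha⟩ := Finset.card_eq_one.mp hcard
      have : ∀ i : Fin n, (if univ.filter (fun j => z j ≠ 0) = {i} then (2 ^ n : ℂ) else 0)
          = if i = a then (2 ^ n : ℂ) else 0 := by
        intro i
        congr 1
        rw [ha]
        simp [Finset.singleton_inj, eq_comm]
      rw [Finset.sum_congr rfl fun i _ => this i, Finset.sum_ite_eq' univ a, if_pos (mem_univ a)]
    · rw [if_neg hcard]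
      refine Finset.sum_eq_zero fun i _ => ?_
      rw [if_neg]
      intro h
      exact hcard (by rw [h]; simp)
  have hfilt : (univ.filter fun i => x i ≠ y i) = (univ.filter fun j => z j ≠ 0) := by
    refine Finset.filter_congr fun i _ => ?_
    have : ∀ a b : ZMod 2, (¬ a = b) ↔ ¬(a + b = 0) := by decide
    simpa using this (x i) (y i)
  have hlhs : (n : ℂ) * ∑ s : Fin n → ZMod 2, d n s * ∏ j, e (z j * s j)
      = if (univ.filter fun j => z j ≠ 0).card = 1 then (2 ^ n : ℂ) else 0 := by
    rw [Finset.mul_sum, ← hmain]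
    exact Finset.sum_congr rfl fun s _ => by ring
  rw [hfilt]
  by_cases hcard : (univ.filter fun j => z j ≠ 0).card = 1
  · rw [if_pos hcard] at hlhs ⊢
    field_simp
    rw [mul_comm] at hlhs
    exact hlhs
  · rw [if_neg hcard] at hlhs ⊢
    have := mul_eq_zero.mp hlhs
    rcases this with h | h
    · exact absurd h hcn
    · exact h

lemma F_apply_zero (s : Fin n → ZMod 2) : F n s 0 = 1 := by
  simp [F, e_zero]

lemma pow_w (ω : ℂ) (s : Fin n → ZMod 2) :
    ω ^ w s = ∏ i, (if s i = 1 then ω else 1) := by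
  rw [← Finset.prod_filter_mul_prod_filter_not univ (fun i => s i = 1)]
  rw [Finset.prod_congr rfl (fun i hi => if_pos (Finset.mem_filter.mp hi).2),
    Finset.prod_congr rfl (fun i hi => if_neg (Finset.mem_filter.mp hi).2),
    Finset.prod_const, Finset.prod_const, one_pow, mul_one]
  rfl

lemma abs_one_add_sq {c ω : ℂ} (hc : c = 1 ∨ c = -1) (hre : ω.re = 0)
    (habs : ‖ω‖ = 1) : ‖1 + c * ω‖ ^ 2 = 2 := by
  rw [Complex.sq_norm, Complex.normSq_add]
  have h1 : Complex.normSq (c * ω) = 1 := by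
    rw [Complex.normSq_mul]
    have : Complex.normSq ω = 1 := by
      rw [← Complex.sq_norm, habs]; norm_num
    rcases hc with h | h <;> simp [h, this]
  have h2 : (1 * (starRingEnd ℂ) (c * ω)).re = 0 := by
    rcases hc with h | h <;>
      simp [h, Complex.conj_re, hre]
  rw [h1, h2]
  norm_num [Complex.normSq_one]

end HQW

open Finset HQW in
/-- For the continuous-time quantum walk on the `n`-cube started at a vertex, at time
`t = k π n / 4` for any odd natural number `k`, the measurement distribution
`|ψ_t(x)|²` is exactly uniform: every vertex has probability `2^{-n}`. -/
theorem hypercube_walk_exact_uniform (n : ℕ) (hn : 1 ≤ n) (k : ℕ) (hk : Odd k)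
    (t : ℝ) (ht : t = k * Real.pi * n / 4)
    (H : Matrix (Fin n → ZMod 2) (Fin n → ZMod 2) ℂ)
    (hH : ∀ x y, H x y =
      if (Finset.univ.filter fun i => x i ≠ y i).card = 1 then (1 / n : ℂ) else 0)
    (ψ : (Fin n → ZMod 2) → ℂ)
    (hψ : ψ = (NormedSpace.exp ((Complex.I * t) • H)).mulVec
      (fun y => if y = 0 then 1 else 0)) :
    ∀ x : Fin n → ZMod 2, ‖ψ x‖ ^ 2 = 1 / 2 ^ n := by
  intro x
  have hn0 : n ≠ 0 := by omega
  have hcn : (n : ℂ) ≠ 0 := Nat.cast_ne_zero.mpr hn0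
  have h2n : (2 ^ n : ℂ) ≠ 0 := pow_ne_zero n two_ne_zero
  -- the unit
  set U : (Matrix (Fin n → ZMod 2) (Fin n → ZMod 2) ℂ)ˣ :=
    ⟨F n, (2 ^ n : ℂ)⁻¹ • F n,
      by rw [Matrix.mul_smul, FF, smul_smul, inv_mul_cancel₀ h2n, one_smul],
      by rw [Matrix.smul_mul, FF, smul_smul, inv_mul_cancel₀ h2n, one_smul]⟩ with hU
  have hUinv : (↑U⁻¹ : Matrix (Fin n → ZMod 2) (Fin n → ZMod 2) ℂ) = (2 ^ n : ℂ)⁻¹ • F n := rfl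
  -- diagonalization of H
  have hHdiag : H = (U : Matrix (Fin n → ZMod 2) (Fin n → ZMod 2) ℂ)
      * Matrix.diagonal (d n)
      * (↑U⁻¹ : Matrix (Fin n → ZMod 2) (Fin n → ZMod 2) ℂ) := by
    ext a b
    rw [hH a b, hUinv]
    show _ = (F n * Matrix.diagonal (d n) * ((2 ^ n : ℂ)⁻¹ • F n)) a b
    rw [Matrix.mul_apply]
    have : ∀ s, (F n * Matrix.diagonal (d n)) a s * ((2 ^ n : ℂ)⁻¹ • F n) s b
        = (2 ^ n : ℂ)⁻¹ * (F n a s * d n s * F n s b) := by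
      intro s
      rw [Matrix.mul_diagonal, Matrix.smul_apply]
      simp [smul_eq_mul]; ring
    rw [Finset.sum_congr rfl fun s _ => this s, ← Finset.mul_sum, key hn0 a b]
    by_cases hc : (univ.filter fun i => a i ≠ b i).card = 1
    · rw [if_pos hc, if_pos hc]
      field_simp
    · rw [if_neg hc, if_neg hc, mul_zero]
  -- compute exp
  have hexpH : NormedSpace.exp ((Complex.I * t) • H)
      = (U : Matrix (Fin n → ZMod 2) (Fin n → ZMod 2) ℂ)
        * Matrix.diagonal (fun s => Complex.exp (Complex.I * t * d n s))
        * (↑U⁻¹ : Matrix (Fin n → ZMod 2) (Fin n → ZMod 2) ℂ) := by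
    rw [hHdiag, ← Matrix.smul_mul, ← Matrix.mul_smul,
      show (Complex.I * ↑t) • Matrix.diagonal (d n)
        = Matrix.diagonal (fun s => Complex.I * ↑t * d n s) by
          ext a b
          rcases eq_or_ne a b with h | h
          · subst h
            simp [Matrix.diagonal_apply_eq, Matrix.smul_apply, smul_eq_mul]
          · simp [Matrix.diagonal_apply_ne _ h, Matrix.smul_apply],
      Matrix.exp_units_conj, Matrix.exp_diagonal]
    have hfn : (NormedSpace.exp fun s : Fin n → ZMod 2 => Complex.I * ↑t * d n s)
        = fun s => Complex.exp (Complex.I * ↑t * d n s) := by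
      funext s
      rw [Pi.coe_exp, ← Complex.exp_eq_exp_ℂ]
    rw [hfn]
  -- explicit formula for ψ
  set ω : ℂ := Complex.exp (((-(k * Real.pi / 2) : ℝ) : ℂ) * Complex.I) with hω
  have htc : (t : ℂ) = (k : ℂ) * (Real.pi : ℂ) * n / 4 := by
    rw [ht]; push_cast; ring
  have hψx : ψ x = (2 ^ n : ℂ)⁻¹ * ∑ s : Fin n → ZMod 2,
      (∏ i, e (x i * s i)) * Complex.exp (Complex.I * t * d n s) := by
    rw [hψ, hexpH]
    have hpick : ∀ (M : Matrix (Fin n → ZMod 2) (Fin n → ZMod 2) ℂ),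
        M.mulVec (fun y => if y = 0 then 1 else 0) x = M x 0 := by
      intro M
      simp [Matrix.mulVec, dotProduct, mul_ite, mul_one, mul_zero,
        Finset.sum_ite_eq']
    rw [hpick, hUinv]
    show (F n * Matrix.diagonal (fun s => Complex.exp (Complex.I * t * d n s))
        * ((2 ^ n : ℂ)⁻¹ • F n)) x 0 = _
    rw [Matrix.mul_apply, Finset.mul_sum]
    refine Finset.sum_congr rfl fun s _ => ?_
    rw [Matrix.mul_diagonal, Matrix.smul_apply, F_apply_zero]
    show F n x s * _ * ((2 ^ n : ℂ)⁻¹ * 1) = _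
    rw [show F n x s = ∏ i, e (x i * s i) from rfl]
    ring
  -- decompose the exponential
  have hexp : ∀ s : Fin n → ZMod 2, Complex.exp (Complex.I * t * d n s)
      = Complex.exp (Complex.I * t) * ω ^ (w s) := by
    intro s
    rw [hω, ← Complex.exp_nat_mul, ← Complex.exp_add]
    congr 1
    rw [d, htc]
    push_cast
    field_simp
    ring
  -- ω facts
  obtain ⟨m, hm⟩ := hk
  have hre : ω.re = 0 := by
    rw [hω, Complex.exp_ofReal_mul_I_re]
    have : -(k * Real.pi / 2) = -((m : ℝ) * Real.pi + Real.pi / 2) := by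
      rw [hm]; push_cast; ring
    rw [this, Real.cos_neg, Real.cos_add_pi_div_two, Real.sin_nat_mul_pi, neg_zero]
  have habs : ‖ω‖ = 1 := by
    rw [hω]; exact Complex.norm_exp_ofReal_mul_I _
  -- factor the character sum
  have hsum : ∑ s : Fin n → ZMod 2, (∏ i, e (x i * s i)) * ω ^ (w s)
      = ∏ i, (1 + e (x i) * ω) := by
    have hstep : ∀ s : Fin n → ZMod 2, (∏ i, e (x i * s i)) * ω ^ w s
        = ∏ i, (e (x i * s i) * if s i = 1 then ω else 1) := by
      intro s
      rw [pow_w, prod_mul_distrib]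
    rw [Finset.sum_congr rfl fun s _ => hstep s,
      sum_prod (fun i b => e (x i * b) * if b = 1 then ω else 1)]
    refine prod_congr rfl fun i _ => ?_
    have h01 : (0 : ZMod 2) ≠ 1 := by decide
    simp [e_zero, h01, mul_zero, mul_one]
  have hψx2 : ψ x = (2 ^ n : ℂ)⁻¹ * (Complex.exp (Complex.I * t)
      * ∏ i, (1 + e (x i) * ω)) := by
    have hmv : ∑ s : Fin n → ZMod 2, (∏ i, e (x i * s i))
          * Complex.exp (Complex.I * t * d n s)
        = Complex.exp (Complex.I * t) * ∑ s : Fin n → ZMod 2,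
          (∏ i, e (x i * s i)) * ω ^ w s := by
      rw [Finset.mul_sum]
      refine Finset.sum_congr rfl fun s _ => ?_
      rw [hexp s]; ring
    rw [hψx, hmv, hsum]
  -- take absolute values
  rw [hψx2, norm_mul, norm_mul, norm_inv, norm_pow, RCLike.norm_two,
    show Complex.I * (t : ℂ) = ((t : ℝ) : ℂ) * Complex.I by ring,
    Complex.norm_exp_ofReal_mul_I, norm_prod]
  rw [mul_pow, mul_pow, one_pow, one_mul, ← Finset.prod_pow]
  have hfac : ∀ i : Fin n, ‖1 + e (x i) * ω‖ ^ 2 = 2 :=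
    fun i => abs_one_add_sq (e_cases (x i)) hre habs
  rw [Finset.prod_congr rfl fun i _ => hfac i, Finset.prod_const]
  simp [Finset.card_univ]
  have h2r : (2 : ℝ) ^ n ≠ 0 := by positivity
  field_simp
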